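/- The set of codes of Σ⁰₁ sets is Gδ: the set BC₁ := {α ∈ 𝒩 | α 0 = 1 and for every n ∈ ℕ, {α⁺}(n)↓ and ({α⁺}(n)) 0 = 0}, where α⁺ := (i ↦ α (i+1)), is a Gδ subset of 𝒩 (a countable intersection of open sets). (This is the instance rbc(1) = 2 of the paper's bound on the rank of the Borel coding.) -/
import Mathlib


open Set

/-- `u` is an initial segment of `β`. -/
def IsInitSeg (β : ℕ → ℕ) (u : List ℕ) : Prop :=
  ∀ i : ℕ, ∀ h : i < u.length, β i = u.get ⟨i, h⟩

/-- The set of finite sequences enumerated by `α` at argument `n`. -/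
def codeSet (α : ℕ → ℕ) (n : ℕ) : Set (List ℕ) :=
  {u : List ℕ | ∃ m, α m = Nat.pair n (Encodable.encode u)}

/-- The shift `α⁺ = (i ↦ α (i+1))`. -/
def shift (α : ℕ → ℕ) : ℕ → ℕ := fun i => α (i + 1)

/-- The set `BC₁` of codes of `Σ⁰₁` sets: `α 0 = 1`, and for every `n` the
partial function coded by `α⁺` is defined at `n` with value starting with `0`. -/
def BC1 : Set (ℕ → ℕ) :=
  {α | α 0 = 1 ∧ ∀ n : ℕ,
    ∃ β : ℕ → ℕ, (∀ u : List ℕ, IsInitSeg β u ↔ u ∈ codeSet (shift α) n) ∧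
      (∀ γ : ℕ → ℕ, (∀ u : List ℕ, IsInitSeg γ u ↔ u ∈ codeSet (shift α) n) → γ = β) ∧
      β 0 = 0}

/-- The closed part: `α 0 = 1`, enumerated words are pairwise comparable,
and the only possible length-one word is `[0]`. -/
def BC1closed : Set (ℕ → ℕ) :=
  {α | α 0 = 1 ∧
    (∀ n : ℕ, ∀ u v : List ℕ, u ∈ codeSet (shift α) n → v ∈ codeSet (shift α) n →
      u <+: v ∨ v <+: u) ∧
    (∀ n : ℕ, ∀ u : List ℕ, u ∈ codeSet (shift α) n → u.length = 1 → u = [0])}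

/-- The open pieces: some word of length `k` is enumerated at `n`. -/
def BC1open (n k : ℕ) : Set (ℕ → ℕ) :=
  {α | ∃ u : List ℕ, u.length = k ∧ u ∈ codeSet (shift α) n}

lemma isInitSeg_prefix {β : ℕ → ℕ} {u v : List ℕ} (hu : IsInitSeg β u) (hv : IsInitSeg β v)
    (h : u.length ≤ v.length) : u <+: v := by
  rw [List.prefix_iff_eq_take]
  apply List.ext_get
  · simp [Nat.min_eq_left h]
  · intro i h1 h2
    have hiv : i < v.length := lt_of_lt_of_le h1 h
    simp only [List.get_eq_getElem, List.getElem_take]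
    exact (hu i h1).symm.trans (hv i hiv)

lemma isInitSeg_of_prefix {β : ℕ → ℕ} {u v : List ℕ} (hv : IsInitSeg β v) (h : u <+: v) :
    IsInitSeg β u := by
  intro i hi
  have hiv : i < v.length := lt_of_lt_of_le hi h.length_le
  rw [hv i hiv]
  simp only [List.get_eq_getElem]
  exact (h.getElem hi).symm

lemma isClosed_BC1closed : IsClosed BC1closed := by
  have h1 : IsClosed {α : ℕ → ℕ | α 0 = 1} :=
    (isClosed_discrete {1}).preimage (continuous_apply 0)
  have h2 : IsClosed {α : ℕ → ℕ | ∀ n : ℕ, ∀ u v : List ℕ,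
      u ∈ codeSet (shift α) n → v ∈ codeSet (shift α) n → u <+: v ∨ v <+: u} := by
    have he : {α : ℕ → ℕ | ∀ n : ℕ, ∀ u v : List ℕ,
        u ∈ codeSet (shift α) n → v ∈ codeSet (shift α) n → u <+: v ∨ v <+: u} =
        ⋂ (n : ℕ), ⋂ (u : List ℕ), ⋂ (v : List ℕ), ⋂ (m : ℕ), ⋂ (m' : ℕ),
          (fun α : ℕ → ℕ => (α (m + 1), α (m' + 1))) ⁻¹'
            {p : ℕ × ℕ | p.1 = Nat.pair n (Encodable.encode u) →
              p.2 = Nat.pair n (Encodable.encode v) → u <+: v ∨ v <+: u} := by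
      ext α
      simp only [mem_iInter, mem_setOf_eq, mem_preimage]
      constructor
      · intro h n u v m m' hm hm'
        exact h n u v ⟨m, hm⟩ ⟨m', hm'⟩
      · rintro h n u v ⟨m, hm⟩ ⟨m', hm'⟩
        exact h n u v m m' hm hm'
    rw [he]
    refine isClosed_iInter fun n => isClosed_iInter fun u => isClosed_iInter fun v =>
      isClosed_iInter fun m => isClosed_iInter fun m' => ?_
    exact (isClosed_discrete _).preimage
      ((continuous_apply (m + 1)).prodMk (continuous_apply (m' + 1)))
  have h3 : IsClosed {α : ℕ → ℕ | ∀ n : ℕ, ∀ u : List ℕ,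
      u ∈ codeSet (shift α) n → u.length = 1 → u = [0]} := by
    have he : {α : ℕ → ℕ | ∀ n : ℕ, ∀ u : List ℕ,
        u ∈ codeSet (shift α) n → u.length = 1 → u = [0]} =
        ⋂ (n : ℕ), ⋂ (u : List ℕ), ⋂ (m : ℕ),
          (fun α : ℕ → ℕ => α (m + 1)) ⁻¹'
            {x : ℕ | x = Nat.pair n (Encodable.encode u) → u.length = 1 → u = [0]} := by
      ext α
      simp only [mem_iInter, mem_setOf_eq, mem_preimage]
      constructor
      · intro h n u m hm
        exact h n u ⟨m, hm⟩
      · rintro h n u ⟨m, hm⟩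
        exact h n u m hm
    rw [he]
    refine isClosed_iInter fun n => isClosed_iInter fun u => isClosed_iInter fun m => ?_
    exact (isClosed_discrete _).preimage (continuous_apply (m + 1))
  exact h1.inter (h2.inter h3)

lemma isOpen_BC1open (n k : ℕ) : IsOpen (BC1open n k) := by
  have he : BC1open n k = ⋃ (u : List ℕ), ⋃ (m : ℕ),
      {α : ℕ → ℕ | u.length = k ∧ α (m + 1) = Nat.pair n (Encodable.encode u)} := by
    ext α
    simp only [BC1open, mem_iUnion, mem_setOf_eq]
    constructor
    · rintro ⟨u, hk, m, hm⟩; exact ⟨u, m, hk, hm⟩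
    · rintro ⟨u, m, hk, hm⟩; exact ⟨u, hk, m, hm⟩
  rw [he]
  refine isOpen_iUnion fun u => isOpen_iUnion fun m => ?_
  by_cases hk : u.length = k
  · have : {α : ℕ → ℕ | u.length = k ∧ α (m + 1) = Nat.pair n (Encodable.encode u)} =
        (fun α : ℕ → ℕ => α (m + 1)) ⁻¹' {Nat.pair n (Encodable.encode u)} := by
      ext α; simp [hk]
    rw [this]
    exact (isOpen_discrete _).preimage (continuous_apply (m + 1))
  · have : {α : ℕ → ℕ | u.length = k ∧ α (m + 1) = Nat.pair n (Encodable.encode u)} = ∅ := by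
      ext α; simp [hk]
    rw [this]; exact isOpen_empty

lemma bc1_eq : BC1 = BC1closed ∩ ⋂ (n : ℕ), ⋂ (k : ℕ), BC1open n k := by
  ext α
  constructor
  · rintro ⟨h0, h⟩
    refine ⟨⟨h0, ?_, ?_⟩, ?_⟩
    · intro n u v hu hv
      obtain ⟨β, hβ, -, -⟩ := h n
      have hu' := (hβ u).mpr hu
      have hv' := (hβ v).mpr hv
      rcases le_total u.length v.length with hle | hle
      · exact Or.inl (isInitSeg_prefix hu' hv' hle)
      · exact Or.inr (isInitSeg_prefix hv' hu' hle)
    · intro n u hu hlen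
      obtain ⟨β, hβ, -, hβ0⟩ := h n
      have hu' := (hβ u).mpr hu
      obtain ⟨a, rfl⟩ := List.length_eq_one_iff.mp hlen
      have := hu' 0 (by simp)
      simp at this
      rw [← this, hβ0]
    · refine mem_iInter.mpr fun n => mem_iInter.mpr fun k => ?_
      obtain ⟨β, hβ, -, -⟩ := h n
      refine ⟨List.ofFn (fun i : Fin k => β i), by simp, (hβ _).mp ?_⟩
      intro i hi
      simp
  · rintro ⟨⟨h0, hcomp, hone⟩, hO⟩
    refine ⟨h0, fun n => ?_⟩
    have hO' : ∀ k : ℕ, ∃ u : List ℕ, u.length = k ∧ u ∈ codeSet (shift α) n :=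
      fun k => mem_iInter.mp (mem_iInter.mp hO n) k
    choose w hwlen hwmem using hO'
    have huniq : ∀ u ∈ codeSet (shift α) n, u = w u.length := by
      intro u hu
      rcases hcomp n u (w u.length) hu (hwmem _) with hp | hp
      · exact hp.eq_of_length (by rw [hwlen])
      · exact (hp.eq_of_length (by rw [hwlen])).symm
    have hpre : ∀ j k : ℕ, j ≤ k → w j <+: w k := by
      intro j k hjk
      rcases hcomp n (w j) (w k) (hwmem _) (hwmem _) with hp | hp
      · exact hp
      · have hlk : (w k).length ≤ (w j).length := hp.length_le
        rw [hwlen, hwlen] at hlk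
        have : j = k := le_antisymm hjk hlk
        subst this
        exact hp
    set β : ℕ → ℕ := fun i => (w (i + 1)).get ⟨i, by rw [hwlen]; omega⟩ with hβdef
    have hinit : ∀ k : ℕ, IsInitSeg β (w k) := by
      intro k i hi
      have hik : i < k := by rwa [hwlen] at hi
      have hp : w (i + 1) <+: w k := hpre (i + 1) k hik
      have hii : i < (w (i + 1)).length := by rw [hwlen]; omega
      simp only [hβdef, List.get_eq_getElem]
      exact hp.getElem hii
    have hiff : ∀ u : List ℕ, IsInitSeg β u ↔ u ∈ codeSet (shift α) n := by
      intro u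
      constructor
      · intro hu
        have : u = w u.length := by
          apply List.ext_get
          · rw [hwlen]
          · intro i hi1 hi2
            rw [← hu i hi1, ← hinit u.length i hi2]
        rw [this]
        exact hwmem _
      · intro hu
        rw [huniq u hu]
        exact hinit _
    refine ⟨β, hiff, ?_, ?_⟩
    · intro γ hγ
      funext i
      have h1 : IsInitSeg γ (w (i + 1)) := (hγ _).mpr (hwmem _)
      have h2 : IsInitSeg β (w (i + 1)) := hinit _
      have hii : i < (w (i + 1)).length := by rw [hwlen]; omega
      rw [h1 i hii, h2 i hii]
    · have h1 : w 1 = [0] := hone n (w 1) (hwmem 1) (hwlen 1)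
      have hii : (0 : ℕ) < (w 1).length := by rw [hwlen]; omega
      have : β 0 = (w 1).get ⟨0, hii⟩ := rfl
      rw [this]
      simp [h1]

theorem bc1_isGδ : IsGδ BC1 := by
  rw [bc1_eq]
  exact isClosed_BC1closed.isGδ.inter
    (IsGδ.iInter fun n => IsGδ.iInter fun k => (isOpen_BC1open n k).isGδ)
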